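/- Let n not be a power of 2 and let p be its smallest odd prime divisor. Define polynomials Ψ₂(X) = X − 1, Ψ_p(X) = 1 + X + ⋯ + X^{p−1}, and for primes q | n with q > p, Ψ_q(X) = ∑_{i=0}^{(q+p)/2} X^i − ∑_{i=(q+p)/2+1}^{q−1} X^i. Let m be the squarefree part of n and T(X) = (∑_{j=0}^{n/m−1} X^j) · ∏_{q | n prime} Ψ_q(X^{n/q}). Then the remainder of T(X) upon division by Xⁿ − 1 has all n coefficients equal to ±1. -/

import Mathlib

open Polynomial Finset

private def eps15 (p q i : ℕ) : ℤ :=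
  if q = 2 then (if i = 0 then -1 else 1)
  else if q = p then 1 else if i ≤ (q + p) / 2 then 1 else -1

private lemma eps15_pm (p q i : ℕ) : eps15 p q i = 1 ∨ eps15 p q i = -1 := by
  unfold eps15; split_ifs <;> simp

private lemma aux_dvd {n q x : ℕ} (hq : q ∈ n.primeFactors)
    (hx : x ∈ n.primeFactors) (hne : x ≠ q) :
    q ^ n.factorization q ∣ n / x := by
  obtain ⟨hxp, hxd, -⟩ := Nat.mem_primeFactors.mp hx
  have key : q ^ ((n / x).factorization q) ∣ n / x := Nat.ordProj_dvd _ _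
  rwa [Nat.factorization_div hxd, Finsupp.tsub_apply, hxp.factorization,
    Finsupp.single_apply, if_neg hne, Nat.sub_zero] at key

private lemma aux_dvd_self {n q : ℕ} (hq : q ∈ n.primeFactors) :
    q ^ (n.factorization q - 1) ∣ n / q := by
  obtain ⟨hqp, hqd, -⟩ := Nat.mem_primeFactors.mp hq
  have key : q ^ ((n / q).factorization q) ∣ n / q := Nat.ordProj_dvd _ _
  rwa [Nat.factorization_div hqd, Finsupp.tsub_apply, hqp.factorization,
    Finsupp.single_apply, if_pos rfl] at key

private lemma aux_nm {n m : ℕ} (hn : n ≠ 0) (hm : m = n.primeFactors.prod id) :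
    n / m = ∏ q ∈ n.primeFactors, q ^ (n.factorization q - 1) := by
  have h0 : ∏ q ∈ n.primeFactors, q ^ n.factorization q = n := by
    have := Nat.factorization_prod_pow_eq_self hn
    rwa [Finsupp.prod, Nat.support_factorization] at this
  have h1 : m * ∏ q ∈ n.primeFactors, q ^ (n.factorization q - 1) = n := by
    have h2 : ∏ q ∈ n.primeFactors, q ^ n.factorization q
        = m * ∏ q ∈ n.primeFactors, q ^ (n.factorization q - 1) := by
      rw [hm, ← Finset.prod_mul_distrib]
      apply Finset.prod_congr rfl
      intro q hq
      have h1 : 1 ≤ n.factorization q :=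
        (Nat.prime_of_mem_primeFactors hq).factorization_pos_of_dvd hn
          (Nat.dvd_of_mem_primeFactors hq)
      simp only [id]
      rw [← pow_succ']
      congr 1
      omega
    rw [← h2, h0]
  have hm0 : m ≠ 0 := by
    intro h0'
    rw [h0', zero_mul] at h1
    exact hn h1.symm
  exact Nat.div_eq_of_eq_mul_left (Nat.pos_of_ne_zero hm0) (h1.symm.trans (mul_comm m _))

private lemma key_inj {n m : ℕ} (hn : n ≠ 0) (hm : m = n.primeFactors.prod id)
    {j j' : ℕ} (hj : j < n / m) (hj' : j' < n / m)
    {f f' : (a : ℕ) → a ∈ n.primeFactors → ℕ}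
    (hf : ∀ a (ha : a ∈ n.primeFactors), f a ha < a)
    (hf' : ∀ a (ha : a ∈ n.primeFactors), f' a ha < a)
    (h : (j + ∑ x ∈ n.primeFactors.attach, f x.1 x.2 * (n / x.1)) % n
       = (j' + ∑ x ∈ n.primeFactors.attach, f' x.1 x.2 * (n / x.1)) % n) :
    j = j' ∧ f = f' := by
  classical
  set SA : ℤ := ∑ x ∈ n.primeFactors.attach, (f x.1 x.2 : ℤ) * ((n / x.1 : ℕ) : ℤ) with hSA
  set SB : ℤ := ∑ x ∈ n.primeFactors.attach, (f' x.1 x.2 : ℤ) * ((n / x.1 : ℕ) : ℤ) with hSB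
  have hdvd' : (n : ℤ) ∣ ((j' : ℤ) + SB) - ((j : ℤ) + SA) := by
    have h2 : (j + ∑ x ∈ n.primeFactors.attach, f x.1 x.2 * (n / x.1))
        ≡ (j' + ∑ x ∈ n.primeFactors.attach, f' x.1 x.2 * (n / x.1)) [MOD n] := h
    have h3 := (Nat.modEq_iff_dvd).mp h2
    rw [hSA, hSB]
    push_cast at h3 ⊢
    convert h3 using 1
  have hSdiff : SB - SA = ∑ x ∈ n.primeFactors.attach,
      ((f' x.1 x.2 : ℤ) - f x.1 x.2) * ((n / x.1 : ℕ) : ℤ) := by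
    rw [hSA, hSB, ← Finset.sum_sub_distrib]
    apply Finset.sum_congr rfl
    intro x _
    ring
  have hstepA : ∀ q ∈ n.primeFactors, (q : ℤ) ^ (n.factorization q - 1) ∣ (j' : ℤ) - j := by
    intro q hq
    have hqn : (q : ℤ) ^ (n.factorization q - 1) ∣ (n : ℤ) := by
      exact_mod_cast Int.natCast_dvd_natCast.mpr
        ((pow_dvd_pow q (Nat.sub_le _ _)).trans (Nat.ordProj_dvd n q))
    have hterm : ∀ x ∈ n.primeFactors.attach,
        (q : ℤ) ^ (n.factorization q - 1) ∣ ((f' x.1 x.2 : ℤ) - f x.1 x.2) * ((n / x.1 : ℕ) : ℤ) := by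
      intro x _
      apply Dvd.dvd.mul_left
      rcases eq_or_ne x.1 q with hxq | hxq
      · subst hxq
        exact_mod_cast Int.natCast_dvd_natCast.mpr (aux_dvd_self x.2)
      · exact_mod_cast Int.natCast_dvd_natCast.mpr
          ((pow_dvd_pow q (Nat.sub_le _ _)).trans (aux_dvd hq x.2 hxq))
    have heq : (j' : ℤ) - j = (((j' : ℤ) + SB) - ((j : ℤ) + SA)) - (SB - SA) := by ring
    rw [heq]
    exact dvd_sub (hqn.trans hdvd') (hSdiff ▸ Finset.dvd_sum hterm)
  have hprod : ((n / m : ℕ) : ℤ) ∣ (j' : ℤ) - j := by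
    rw [aux_nm hn hm]
    push_cast
    apply Finset.prod_dvd_of_coprime
    · intro a ha b hb hab
      simp only [Function.onFun]
      apply IsCoprime.pow
      rw [Nat.isCoprime_iff_coprime]
      exact (Nat.coprime_primes (Nat.prime_of_mem_primeFactors ha)
        (Nat.prime_of_mem_primeFactors hb)).mpr hab
    · exact fun q hq => hstepA q hq
  have hjj : j = j' := by
    have h1 : j % (n / m) = j' % (n / m) := (Nat.modEq_iff_dvd).mpr hprod
    rwa [Nat.mod_eq_of_lt hj, Nat.mod_eq_of_lt hj'] at h1
  subst hjj
  refine ⟨rfl, ?_⟩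
  have hdvd2 : (n : ℤ) ∣ SB - SA := by
    have := hdvd'
    simpa using this
  funext a ha
  have haP := Nat.prime_of_mem_primeFactors ha
  have ha1 : 1 ≤ n.factorization a :=
    haP.factorization_pos_of_dvd hn (Nat.dvd_of_mem_primeFactors ha)
  have hd : (a : ℤ) ^ n.factorization a ∣ ((f' a ha : ℤ) - f a ha) * ((n / a : ℕ) : ℤ) := by
    have hsplit : ((f' a ha : ℤ) - f a ha) * ((n / a : ℕ) : ℤ)
        = (SB - SA) - ∑ x ∈ (n.primeFactors.attach).erase ⟨a, ha⟩,
            ((f' x.1 x.2 : ℤ) - f x.1 x.2) * ((n / x.1 : ℕ) : ℤ) := by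
      have hadd := Finset.add_sum_erase (n.primeFactors.attach)
        (fun x => ((f' x.1 x.2 : ℤ) - f x.1 x.2) * ((n / x.1 : ℕ) : ℤ))
        (Finset.mem_attach _ (⟨a, ha⟩ : {x // x ∈ n.primeFactors}))
      rw [hSdiff, ← hadd]
      ring
    rw [hsplit]
    apply dvd_sub
    · exact Dvd.dvd.trans (by exact_mod_cast Int.natCast_dvd_natCast.mpr (Nat.ordProj_dvd n a)) hdvd2
    · apply Finset.dvd_sum
      intro x hx
      have hxne : x.1 ≠ a := by
        intro hxa
        exact Finset.ne_of_mem_erase hx (Subtype.ext hxa)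
      exact Dvd.dvd.mul_left (by exact_mod_cast Int.natCast_dvd_natCast.mpr (aux_dvd ha x.2 hxne)) _
  have hna : n / a = a ^ (n.factorization a - 1) * (n / a ^ n.factorization a) := by
    have h1 : a ^ n.factorization a * (n / a ^ n.factorization a) = n :=
      Nat.ordProj_mul_ordCompl_eq_self n a
    have h2 : a ^ n.factorization a = a * a ^ (n.factorization a - 1) := by
      rw [← pow_succ']
      congr 1
      omega
    apply Nat.div_eq_of_eq_mul_left haP.pos
    calc n = a ^ n.factorization a * (n / a ^ n.factorization a) := h1.symm
    _ = a ^ (n.factorization a - 1) * (n / a ^ n.factorization a) * a := by rw [h2]; ring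
  rw [hna, Nat.cast_mul, Nat.cast_pow] at hd
  have hapow : (a : ℤ) ^ n.factorization a = (a : ℤ) ^ (n.factorization a - 1) * a := by
    rw [← pow_succ]
    congr 1
    omega
  have hrhs : ((f' a ha : ℤ) - f a ha) * ((a : ℤ) ^ (n.factorization a - 1) * ((n / a ^ n.factorization a : ℕ) : ℤ))
      = (a : ℤ) ^ (n.factorization a - 1) * (((f' a ha : ℤ) - f a ha) * ((n / a ^ n.factorization a : ℕ) : ℤ)) := by
    ring
  rw [hapow, hrhs] at hd
  have hd2 : (a : ℤ) ∣ ((f' a ha : ℤ) - f a ha) * ((n / a ^ n.factorization a : ℕ) : ℤ) :=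
    (mul_dvd_mul_iff_left (pow_ne_zero _ (by exact_mod_cast haP.pos.ne' : (a : ℤ) ≠ 0))).mp hd
  rcases (Nat.prime_iff_prime_int.mp haP).dvd_mul.mp hd2 with hcase | hcase
  · have h1 : f a ha % a = f' a ha % a := (Nat.modEq_iff_dvd).mpr hcase
    rwa [Nat.mod_eq_of_lt (hf a ha), Nat.mod_eq_of_lt (hf' a ha)] at h1
  · exfalso
    exact Nat.not_dvd_ordCompl haP hn (Int.natCast_dvd_natCast.mp hcase)

open Polynomial in
theorem stmt_15 (n : ℕ) (hn : 2 ≤ n) (hn2 : ¬ ∃ a : ℕ, n = 2 ^ a)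
    (p : ℕ) (hp : p = sInf {q : ℕ | q.Prime ∧ Odd q ∧ q ∣ n})
    (m : ℕ) (hm : m = n.primeFactors.prod id)
    (Ψ : ℕ → Polynomial ℤ)
    (hΨ2 : Ψ 2 = X - 1)
    (hΨp : Ψ p = ∑ i ∈ Finset.range p, X ^ i)
    (hΨq : ∀ q : ℕ, q.Prime → q ∣ n → p < q →
      Ψ q = (∑ i ∈ Finset.range ((q + p) / 2 + 1), X ^ i) -
            ∑ i ∈ Finset.Ico ((q + p) / 2 + 1) q, X ^ i)
    (T : Polynomial ℤ)
    (hT : T = (∑ j ∈ Finset.range (n / m), X ^ j) *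
      ∏ q ∈ n.primeFactors, (Ψ q).comp (X ^ (n / q))) :
    ∀ j < n, (T %ₘ (X ^ n - 1)).coeff j = 1 ∨ (T %ₘ (X ^ n - 1)).coeff j = -1 := by
  classical
  have hn0 : n ≠ 0 := by omega
  have npos : 0 < n := by omega
  -- existence of an odd prime divisor
  have hex : {q : ℕ | q.Prime ∧ Odd q ∧ q ∣ n}.Nonempty := by
    by_contra hcon
    rw [Set.not_nonempty_iff_eq_empty] at hcon
    have hcon' : ∀ q : ℕ, q.Prime → Odd q → ¬ q ∣ n := by
      intro q h1 h2 h3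
      have : q ∈ {q : ℕ | q.Prime ∧ Odd q ∧ q ∣ n} := ⟨h1, h2, h3⟩
      rw [hcon] at this
      exact this
    have hsub : n.primeFactors ⊆ {2} := by
      intro q hq
      rw [Finset.mem_singleton]
      obtain ⟨hqp, hqd, -⟩ := Nat.mem_primeFactors.mp hq
      by_contra hq2
      exact hcon' q hqp (hqp.odd_of_ne_two hq2) hqd
    apply hn2
    rcases Finset.subset_singleton_iff.mp hsub with he | he
    · rw [Nat.primeFactors_eq_empty] at he
      exact absurd he (by omega)
    · refine ⟨n.factorization 2, ?_⟩
      have h0 := Nat.factorization_prod_pow_eq_self hn0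
      rw [Finsupp.prod, Nat.support_factorization, he, Finset.prod_singleton] at h0
      exact h0.symm
  have hpmem : p.Prime ∧ Odd p ∧ p ∣ n := hp ▸ Nat.sInf_mem hex
  obtain ⟨hpp, hpodd, hpdvd⟩ := hpmem
  have hmin : ∀ q : ℕ, q.Prime → Odd q → q ∣ n → p ≤ q := fun q h1 h2 h3 =>
    hp ▸ Nat.sInf_le ⟨h1, h2, h3⟩
  have hp2 : p ≠ 2 := by
    rintro rfl
    exact (by decide : ¬ Odd 2) hpodd
  -- coefficients of Ψ q
  have hΨcoeff : ∀ q ∈ n.primeFactors,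
      Ψ q = ∑ i ∈ Finset.range q, C (eps15 p q i) * X ^ i := by
    intro q hq
    obtain ⟨hqp, hqd, -⟩ := Nat.mem_primeFactors.mp hq
    by_cases hq2 : q = 2
    · subst hq2
      rw [hΨ2]
      simp [eps15, Finset.sum_range_succ]
      ring
    · have hqodd := hqp.odd_of_ne_two hq2
      have hpq : p ≤ q := hmin q hqp hqodd hqd
      rcases eq_or_lt_of_le hpq with heq | hlt
      · subst heq
        rw [hΨp]
        apply Finset.sum_congr rfl
        intro i _
        simp [eps15, hp2]
      · have hqp' : q ≠ p := (ne_of_gt hlt)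
        rw [hΨq q hqp hqd hlt]
        have hhq : (q + p) / 2 + 1 ≤ q := by
          have h2 : q + p < q * 2 := by omega
          have := Nat.div_lt_of_lt_mul h2
          omega
        rw [show Finset.range q = Finset.Ico 0 q by ext; simp,
          ← Finset.sum_Ico_consecutive (fun i => C (eps15 p q i) * X ^ i)
            (Nat.zero_le ((q + p) / 2 + 1)) hhq]
        have h1 : ∑ i ∈ Finset.Ico 0 ((q + p) / 2 + 1), C (eps15 p q i) * X ^ i
            = ∑ i ∈ Finset.range ((q + p) / 2 + 1), (X : Polynomial ℤ) ^ i := by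
          rw [← Finset.range_eq_Ico]
          apply Finset.sum_congr rfl
          intro i hi
          have hi' : i ≤ (q + p) / 2 := by
            rw [Finset.mem_range] at hi
            omega
          simp [eps15, hq2, hqp', hi']
        have h2 : ∑ i ∈ Finset.Ico ((q + p) / 2 + 1) q, C (eps15 p q i) * X ^ i
            = -∑ i ∈ Finset.Ico ((q + p) / 2 + 1) q, (X : Polynomial ℤ) ^ i := by
          rw [← Finset.sum_neg_distrib]
          apply Finset.sum_congr rfl
          intro i hi
          have hi' : ¬ i ≤ (q + p) / 2 := by
            rw [Finset.mem_Ico] at hi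
            omega
          simp [eps15, hq2, hqp', hi']
        rw [h1, h2, Finset.range_eq_Ico]
        ring
  -- composed polynomials
  have hcomp : ∀ q ∈ n.primeFactors, (Ψ q).comp (X ^ (n / q))
      = ∑ i ∈ Finset.range q, C (eps15 p q i) * X ^ (i * (n / q)) := by
    intro q hq
    rw [hΨcoeff q hq, Polynomial.sum_comp]
    apply Finset.sum_congr rfl
    intro i _
    rw [Polynomial.mul_comp, Polynomial.C_comp, Polynomial.X_pow_comp, ← pow_mul, mul_comm (n / q) i]
  -- expand the product
  have hprodexp : ∏ q ∈ n.primeFactors, (Ψ q).comp (X ^ (n / q))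
      = ∑ f ∈ n.primeFactors.pi (fun q => Finset.range q),
          C (∏ x ∈ n.primeFactors.attach, eps15 p x.1 (f x.1 x.2))
            * X ^ (∑ x ∈ n.primeFactors.attach, f x.1 x.2 * (n / x.1)) := by
    rw [Finset.prod_congr rfl hcomp, Finset.prod_sum]
    apply Finset.sum_congr rfl
    intro f hf
    rw [Finset.prod_mul_distrib, ← map_prod, Finset.prod_pow_eq_pow_sum]
  -- expanded T
  have hTexp : T = ∑ j ∈ Finset.range (n / m),
      ∑ f ∈ n.primeFactors.pi (fun q => Finset.range q),
        C (∏ x ∈ n.primeFactors.attach, eps15 p x.1 (f x.1 x.2))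
          * X ^ (j + ∑ x ∈ n.primeFactors.attach, f x.1 x.2 * (n / x.1)) := by
    rw [hT, hprodexp, Finset.sum_mul_sum]
    apply Finset.sum_congr rfl
    intro j _
    apply Finset.sum_congr rfl
    intro f _
    rw [pow_add]
    ring
  -- folded polynomial S
  set S : Polynomial ℤ := ∑ j ∈ Finset.range (n / m),
      ∑ f ∈ n.primeFactors.pi (fun q => Finset.range q),
        C (∏ x ∈ n.primeFactors.attach, eps15 p x.1 (f x.1 x.2))
          * X ^ ((j + ∑ x ∈ n.primeFactors.attach, f x.1 x.2 * (n / x.1)) % n) with hS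
  have hdvd : (X ^ n - 1 : Polynomial ℤ) ∣ T - S := by
    rw [hTexp, hS, ← Finset.sum_sub_distrib]
    apply Finset.dvd_sum
    intro j _
    rw [← Finset.sum_sub_distrib]
    apply Finset.dvd_sum
    intro f _
    rw [← mul_sub]
    apply Dvd.dvd.mul_left
    set e := j + ∑ x ∈ n.primeFactors.attach, f x.1 x.2 * (n / x.1) with he
    have heq2 : (X : Polynomial ℤ) ^ e - X ^ (e % n) = ((X ^ n) ^ (e / n) - 1) * X ^ (e % n) := by
      rw [sub_mul, one_mul, ← pow_mul, ← pow_add, Nat.div_add_mod]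
    rw [heq2]
    exact Dvd.dvd.mul_right (by simpa using sub_dvd_pow_sub_pow ((X : Polynomial ℤ) ^ n) 1 (e / n)) _
  -- degree facts
  have hmonic : (X ^ n - 1 : Polynomial ℤ).Monic := by
    have := monic_X_pow_sub_C (1 : ℤ) hn0
    simpa using this
  have hdegg : (X ^ n - 1 : Polynomial ℤ).degree = n := by
    have := degree_X_pow_sub_C npos (1 : ℤ)
    simpa using this
  have hdegS : S.degree < (n : WithBot ℕ) := by
    rw [hS]
    apply lt_of_le_of_lt (Polynomial.degree_sum_le _ _)
    rw [Finset.sup_lt_iff (by exact_mod_cast WithBot.bot_lt_coe n)]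
    intro j _
    apply lt_of_le_of_lt (Polynomial.degree_sum_le _ _)
    rw [Finset.sup_lt_iff (by exact_mod_cast WithBot.bot_lt_coe n)]
    intro f _
    apply lt_of_le_of_lt (Polynomial.degree_C_mul_X_pow_le _ _)
    exact_mod_cast Nat.mod_lt _ npos
  -- T %ₘ (X^n - 1) = S
  obtain ⟨Q, hQ⟩ := hdvd
  have hmod : T %ₘ (X ^ n - 1) = S := by
    exact (Polynomial.div_modByMonic_unique (f := T) Q S hmonic
      ⟨by linear_combination -hQ, by rw [hdegg]; exact hdegS⟩).2
  -- cardinality of index set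
  have hmdvd : m ∣ n := by
    rw [hm]
    exact Nat.prod_primeFactors_dvd n
  have hcard : ((Finset.range (n / m)) ×ˢ (n.primeFactors.pi (fun q => Finset.range q))).card = n := by
    rw [Finset.card_product, Finset.card_range, Finset.card_pi]
    have : ∏ q ∈ n.primeFactors, (Finset.range q).card = m := by
      rw [hm]
      apply Finset.prod_congr rfl
      intro q _
      simp
    rw [this]
    exact Nat.div_mul_cancel hmdvd
  -- main conclusion
  intro j hjn
  rw [hmod]
  -- rewrite S as a single sum over the product set
  have hScoeff : S.coeff j = ∑ z ∈ (Finset.range (n / m)) ×ˢ (n.primeFactors.pi (fun q => Finset.range q)),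
      (if j = (z.1 + ∑ x ∈ n.primeFactors.attach, z.2 x.1 x.2 * (n / x.1)) % n
        then ∏ x ∈ n.primeFactors.attach, eps15 p x.1 (z.2 x.1 x.2) else 0) := by
    rw [hS, ← Finset.sum_product']
    rw [Polynomial.finset_sum_coeff]
    apply Finset.sum_congr rfl
    intro z _
    rw [Polynomial.coeff_C_mul, Polynomial.coeff_X_pow]
    simp [mul_ite]
  rw [hScoeff]
  -- surjectivity: find the unique preimage
  obtain ⟨z₀, hz₀I, hz₀⟩ := Finset.surj_on_of_inj_on_of_card_le
    (f := fun (z : ℕ × ((a : ℕ) → a ∈ n.primeFactors → ℕ)) (_ : z ∈ (Finset.range (n / m)) ×ˢ (n.primeFactors.pi (fun q => Finset.range q))) =>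
      (z.1 + ∑ x ∈ n.primeFactors.attach, z.2 x.1 x.2 * (n / x.1)) % n)
    (fun z hz => Finset.mem_range.mpr (Nat.mod_lt _ npos))
    (by
      intro z₁ z₂ h₁ h₂ heq
      rw [Finset.mem_product] at h₁ h₂
      obtain ⟨hj₁, hf₁⟩ := h₁
      obtain ⟨hj₂, hf₂⟩ := h₂
      have := key_inj hn0 hm (Finset.mem_range.mp hj₁) (Finset.mem_range.mp hj₂)
        (fun a ha => Finset.mem_range.mp (Finset.mem_pi.mp hf₁ a ha))
        (fun a ha => Finset.mem_range.mp (Finset.mem_pi.mp hf₂ a ha)) heq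
      exact Prod.ext this.1 this.2)
    (by rw [Finset.card_range, hcard]) j (Finset.mem_range.mpr hjn)
  rw [Finset.sum_eq_single z₀]
  · rw [if_pos hz₀]
    apply Finset.prod_induction _ (fun x : ℤ => x = 1 ∨ x = -1)
    · rintro a b (rfl | rfl) (rfl | rfl) <;> norm_num
    · exact Or.inl rfl
    · intro x _
      exact eps15_pm p x.1 _
  · intro b hb hbne
    rw [if_neg]
    intro hjb
    apply hbne
    rw [Finset.mem_product] at hb hz₀I
    have heq : (b.1 + ∑ x ∈ n.primeFactors.attach, b.2 x.1 x.2 * (n / x.1)) % n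
        = (z₀.1 + ∑ x ∈ n.primeFactors.attach, z₀.2 x.1 x.2 * (n / x.1)) % n := by
      rw [← hjb, hz₀]
    have := key_inj hn0 hm (Finset.mem_range.mp hb.1) (Finset.mem_range.mp hz₀I.1)
      (fun a ha => Finset.mem_range.mp (Finset.mem_pi.mp hb.2 a ha))
      (fun a ha => Finset.mem_range.mp (Finset.mem_pi.mp hz₀I.2 a ha)) heq
    exact Prod.ext this.1 this.2
  · intro habs
    exact absurd hz₀I habs
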